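/- arXiv:2507.13327 — 2 statements merged into one kernel-verified Lean document; each statement's English description precedes it below -/
import Mathlib

section
/- Let G be a d-regular finite simple graph on n ≥ 2 vertices. Then there exist 2n − 2 linearly independent eigenvectors of the adjacency matrix of the Mycielskian M(G) (whose vertex set has size 2n + 1), each of which vanishes at the central vertex u and is orthogonal to the all-ones vector on V(M(G)); consequently the singleton {u} is a graphical design of M(G) averaging 2n − 2 of the 2n + 1 adjacency eigenvectors. -/
open Finset Matrix


variable {V : Type*}

/-- Adjacency relation of the Mycielskian of `G`: vertex set `V ⊔ V' ⊔ {u}`,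
with `v ~ w` for edges `vw` of `G`, `v ~ w'` and `v' ~ w` for edges `vw` of `G`,
and `u ~ v'` for every `v`. -/
def mycAdj (G : SimpleGraph V) : V ⊕ V ⊕ Unit → V ⊕ V ⊕ Unit → Prop
  | Sum.inl v, Sum.inl w => G.Adj v w
  | Sum.inl v, Sum.inr (Sum.inl w) => G.Adj v w
  | Sum.inr (Sum.inl v), Sum.inl w => G.Adj v w
  | Sum.inr (Sum.inl _), Sum.inr (Sum.inr _) => True
  | Sum.inr (Sum.inr _), Sum.inr (Sum.inl _) => True
  | _, _ => False

/-- The Mycielskian of a simple graph `G`. -/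
def mycielskian (G : SimpleGraph V) : SimpleGraph (V ⊕ V ⊕ Unit) where
  Adj := mycAdj G
  symm := by
    constructor
    rintro (v | v | v) (w | w | w) h <;> simp only [mycAdj] at h ⊢ <;>
      first
        | exact G.adj_symm h
        | exact h
        | trivial
  loopless := by
    constructor
    rintro (v | v | v) h <;> simp only [mycAdj] at h <;>
      first
        | exact G.irrefl h
        | exact h

instance (G : SimpleGraph V) [DecidableRel G.Adj] : DecidableRel (mycielskian G).Adj :=
  fun a b =>
    match a, b with
    | Sum.inl v, Sum.inl w => inferInstanceAs (Decidable (G.Adj v w))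
    | Sum.inl v, Sum.inr (Sum.inl w) => inferInstanceAs (Decidable (G.Adj v w))
    | Sum.inl _, Sum.inr (Sum.inr _) => inferInstanceAs (Decidable False)
    | Sum.inr (Sum.inl v), Sum.inl w => inferInstanceAs (Decidable (G.Adj v w))
    | Sum.inr (Sum.inl _), Sum.inr (Sum.inl _) => inferInstanceAs (Decidable False)
    | Sum.inr (Sum.inl _), Sum.inr (Sum.inr _) => inferInstanceAs (Decidable True)
    | Sum.inr (Sum.inr _), Sum.inl _ => inferInstanceAs (Decidable False)
    | Sum.inr (Sum.inr _), Sum.inr (Sum.inl _) => inferInstanceAs (Decidable True)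
    | Sum.inr (Sum.inr _), Sum.inr (Sum.inr _) => inferInstanceAs (Decidable False)

/-- For a `d`-regular graph `G` on `n ≥ 2` vertices, the Mycielskian `M(G)` has
`2n+1` vertices and there exist `2n − 2` linearly independent eigenvectors of its
adjacency matrix, each vanishing at the central vertex `u` and orthogonal to the
all-ones vector; hence `{u}` is a graphical design averaging `2n − 2` of the `2n + 1`
adjacency eigenvectors. -/
theorem mycielskian_central_vertex_design
    {V : Type*} [Fintype V] [DecidableEq V] (G : SimpleGraph V) [DecidableRel G.Adj]
    (d n : ℕ) (hreg : G.IsRegularOfDegree d) (hn : Fintype.card V = n) (hn2 : 2 ≤ n) :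
    Fintype.card (V ⊕ V ⊕ Unit) = 2 * n + 1 ∧
    ∃ z : Fin (2 * n - 2) → (V ⊕ V ⊕ Unit → ℝ),
      LinearIndependent ℝ z ∧
      ∀ j, (∃ μ : ℝ, (mycielskian G).adjMatrix ℝ *ᵥ z j = μ • z j) ∧
        z j (Sum.inr (Sum.inr ())) = 0 ∧
        ∑ w, z j w * 1 = 0 := by
  classical
  have hne : Nonempty V := by
    rw [← Fintype.card_pos_iff]; omega
  obtain ⟨v0⟩ := hne
  have hcard : Fintype.card (V ⊕ V ⊕ Unit) = 2 * n + 1 := by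
    simp [Fintype.card_sum, hn]; ring
  refine ⟨hcard, ?_⟩
  set A := (mycielskian G).adjMatrix ℝ with hA
  -- pointwise entries of A
  have hA_ll : ∀ v w : V, A (Sum.inl v) (Sum.inl w) = if G.Adj v w then (1:ℝ) else 0 := by
    intro v w
    by_cases h : G.Adj v w
    · exact (if_pos h).trans (if_pos h).symm
    · exact (if_neg h).trans (if_neg h).symm
  have hA_lr : ∀ v w : V, A (Sum.inl v) (Sum.inr (Sum.inl w)) = if G.Adj v w then (1:ℝ) else 0 := by
    intro v w
    by_cases h : G.Adj v w
    · exact (if_pos h).trans (if_pos h).symm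
    · exact (if_neg h).trans (if_neg h).symm
  have hA_rl : ∀ v w : V, A (Sum.inr (Sum.inl v)) (Sum.inl w) = if G.Adj v w then (1:ℝ) else 0 := by
    intro v w
    by_cases h : G.Adj v w
    · exact (if_pos h).trans (if_pos h).symm
    · exact (if_neg h).trans (if_neg h).symm
  have hA_lu : ∀ (v : V) (x : Unit), A (Sum.inl v) (Sum.inr (Sum.inr x)) = 0 :=
    by intro v x; rw [hA, SimpleGraph.adjMatrix_apply]; exact if_neg (fun h => h)
  have hA_rr : ∀ v w : V, A (Sum.inr (Sum.inl v)) (Sum.inr (Sum.inl w)) = 0 :=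
    by intro v w; rw [hA, SimpleGraph.adjMatrix_apply]; exact if_neg (fun h => h)
  have hA_ru : ∀ (v : V) (x : Unit), A (Sum.inr (Sum.inl v)) (Sum.inr (Sum.inr x)) = 1 :=
    by intro v x; rw [hA, SimpleGraph.adjMatrix_apply]; exact if_pos trivial
  have hA_ul : ∀ (x : Unit) (v : V), A (Sum.inr (Sum.inr x)) (Sum.inl v) = 0 :=
    by intro x v; rw [hA, SimpleGraph.adjMatrix_apply]; exact if_neg (fun h => h)
  have hA_ur : ∀ (x : Unit) (v : V), A (Sum.inr (Sum.inr x)) (Sum.inr (Sum.inl v)) = 1 :=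
    by intro x v; rw [hA, SimpleGraph.adjMatrix_apply]; exact if_pos trivial
  have hA_uu : ∀ x y : Unit, A (Sum.inr (Sum.inr x)) (Sum.inr (Sum.inr y)) = 0 :=
    by intro x y; rw [hA, SimpleGraph.adjMatrix_apply]; exact if_neg (fun h => h)
  -- column sums of the adjacency matrix of G
  have hcol : ∀ w : V, ∑ v : V, (if G.Adj v w then (1 : ℝ) else 0) = d := by
    intro w
    rw [Finset.sum_boole]
    have hfil : (Finset.univ.filter fun v => G.Adj v w) = G.neighborFinset w := by
      ext v; simp [SimpleGraph.adj_comm]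
    rw [hfil]
    have hd : (G.neighborFinset w).card = d := hreg w
    rw [hd]
  -- the linear functional cutting out our subspace
  let L : EuclideanSpace ℝ (V ⊕ V ⊕ Unit) →ₗ[ℝ] (Fin 3 → ℝ) :=
    { toFun := fun z => ![z (Sum.inr (Sum.inr ())), ∑ v, z (Sum.inl v),
        ∑ v, z (Sum.inr (Sum.inl v))]
      map_add' := by
        intro x y
        funext i
        fin_cases i <;> simp [Finset.sum_add_distrib]
      map_smul' := by
        intro c x
        funext i
        fin_cases i <;> simp [Finset.mul_sum] }
  have hLapp : ∀ (z : EuclideanSpace ℝ (V ⊕ V ⊕ Unit)),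
      L z = ![z (Sum.inr (Sum.inr ())), ∑ v, z (Sum.inl v), ∑ v, z (Sum.inr (Sum.inl v))] :=
    fun z => rfl
  have hker : ∀ z : EuclideanSpace ℝ (V ⊕ V ⊕ Unit), z ∈ LinearMap.ker L →
      z (Sum.inr (Sum.inr ())) = 0 ∧ ∑ v, z (Sum.inl v) = 0 ∧
        ∑ v, z (Sum.inr (Sum.inl v)) = 0 := by
    intro z hz
    rw [LinearMap.mem_ker, hLapp] at hz
    refine ⟨?_, ?_, ?_⟩
    · have := congrFun hz 0
      simpa using this
    · have := congrFun hz 1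
      simpa using this
    · have := congrFun hz 2
      simpa using this
  have hLsurj : Function.Surjective L := by
    intro c
    refine ⟨WithLp.toLp 2 (fun w : V ⊕ V ⊕ Unit => match w with
      | Sum.inl v => if v = v0 then c 1 else 0
      | Sum.inr (Sum.inl v) => if v = v0 then c 2 else 0
      | Sum.inr (Sum.inr _) => c 0), ?_⟩
    rw [hLapp]
    funext i
    fin_cases i <;> simp [Finset.sum_ite_eq']
  have hrank : Module.finrank ℝ (LinearMap.ker L) = 2 * n - 2 := by
    have h1 := LinearMap.finrank_range_add_finrank_ker L
    rw [LinearMap.range_eq_top.mpr hLsurj, finrank_top, Module.finrank_fin_fun,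
      finrank_euclideanSpace, hcard] at h1
    omega
  -- the adjacency operator
  set T := Matrix.toEuclideanLin A with hT
  have hsymm : T.IsSymmetric := by
    rw [hT, ← Matrix.isHermitian_iff_isSymmetric]
    rw [Matrix.IsHermitian, Matrix.conjTranspose_eq_transpose_of_trivial]
    exact SimpleGraph.isSymm_adjMatrix _
  have hTapply : ∀ x : EuclideanSpace ℝ (V ⊕ V ⊕ Unit), ∀ w, T x w = ∑ y, A w y * x y := by
    intro x w; rfl
  -- invariance of ker L under T
  have hinv : ∀ z ∈ LinearMap.ker L, T z ∈ LinearMap.ker L := by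
    intro z hz
    obtain ⟨hz0, hz1, hz2⟩ := hker z hz
    rw [LinearMap.mem_ker, hLapp]
    funext i
    fin_cases i
    · -- value at u
      show T z (Sum.inr (Sum.inr ())) = 0
      rw [hTapply, Fintype.sum_sum_type, Fintype.sum_sum_type]
      simp only [hA_ul, hA_ur, hA_uu, zero_mul, one_mul]
      simpa using hz2
    · -- sum over V
      show ∑ v, T z (Sum.inl v) = 0
      simp only [hTapply]
      rw [Finset.sum_comm]
      have hfac : ∀ x, ∑ v : V, A (Sum.inl v) x * z x = (∑ v : V, A (Sum.inl v) x) * z x := by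
        intro x; rw [Finset.sum_mul]
      simp only [hfac]
      rw [Fintype.sum_sum_type, Fintype.sum_sum_type]
      simp only [hA_ll, hA_lr, hA_lu, hcol]
      rw [← Finset.mul_sum, ← Finset.mul_sum, hz1, hz2]
      simp
    · -- sum over V'
      show ∑ v, T z (Sum.inr (Sum.inl v)) = 0
      simp only [hTapply]
      rw [Finset.sum_comm]
      have hfac : ∀ x, ∑ v : V, A (Sum.inr (Sum.inl v)) x * z x
          = (∑ v : V, A (Sum.inr (Sum.inl v)) x) * z x := by
        intro x; rw [Finset.sum_mul]
      simp only [hfac]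
      rw [Fintype.sum_sum_type, Fintype.sum_sum_type]
      simp only [hA_rl, hA_rr, hA_ru, hcol]
      rw [← Finset.mul_sum, hz1]
      simp [hz0]
  -- spectral theorem on the restriction
  have hsymm' : (T.restrict hinv).IsSymmetric := hsymm.restrict_invariant hinv
  let b := hsymm'.eigenvectorBasis hrank
  refine ⟨fun j => ((b j : EuclideanSpace ℝ (V ⊕ V ⊕ Unit)) : (V ⊕ V ⊕ Unit) → ℝ), ?_, ?_⟩
  · have hb : LinearIndependent ℝ (fun j => b j) := b.toBasis.linearIndependent
    have := hb.map' (LinearMap.ker L).subtype (Submodule.ker_subtype _)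
    exact this.map' (WithLp.linearEquiv 2 ℝ (V ⊕ V ⊕ Unit → ℝ)).toLinearMap (LinearEquiv.ker _)
  · intro j
    obtain ⟨hz0, hz1, hz2⟩ := hker _ (b j).2
    refine ⟨⟨hsymm'.eigenvalues hrank j, ?_⟩, hz0, ?_⟩
    · have heig := hsymm'.apply_eigenvectorBasis hrank j
      have h2 := congrArg Subtype.val heig
      rw [LinearMap.restrict_coe_apply, Submodule.coe_smul] at h2
      have h3 := congrArg WithLp.ofLp h2
      exact h3
    · simp only [mul_one]
      rw [Fintype.sum_sum_type, Fintype.sum_sum_type]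
      rw [hz1, hz2]
      simpa using hz0
end

section
/- Let G be a d-regular finite simple graph on n vertices and let D be a nonempty subset of V(M(G)). Suppose that for every μ ∈ ℝ and every x : V → ℝ with A(G) x = μ x and ∑_{v∈V} x(v) = 0, one has both ∑_{v∈V : v∈D} x(v) − φ̄·∑_{v∈V : v'∈D} x(v) = 0 and ∑_{v∈V : v∈D} x(v) − φ·∑_{v∈V : v'∈D} x(v) = 0 (i.e., D averages all 2n − 2 eigenvectors of the adjacency matrix of M(G) that arise from eigenvectors of A(G) orthogonal to the all-ones vector). Then either D = {u} or |D| ≥ n. -/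
open Finset Matrix


variable {V : Type*}

lemma key_avg_lemma {V : Type*} [Fintype V] [DecidableEq V] (G : SimpleGraph V)
    [DecidableRel G.Adj] (d : ℕ) (hreg : G.IsRegularOfDegree d) (D' : Finset V)
    (h : ∀ (μ : ℝ) (x : V → ℝ), G.adjMatrix ℝ *ᵥ x = μ • x → ∑ v, x v = 0 →
      ∑ v ∈ D', x v = 0) :
    D' = ∅ ∨ D' = Finset.univ := by
  rcases isEmpty_or_nonempty V with hV | hV
  · left; exact Finset.eq_empty_of_isEmpty D'
  have hn0 : (0 : ℝ) < (Fintype.card V : ℝ) := by exact_mod_cast Fintype.card_pos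
  set n : ℝ := (Fintype.card V : ℝ) with hn
  have hnne : n ≠ 0 := ne_of_gt hn0
  -- column sums of the adjacency matrix
  have hsum : ∀ x : V → ℝ, ∑ v, (G.adjMatrix ℝ *ᵥ x) v = d * ∑ v, x v := by
    intro x
    simp only [SimpleGraph.adjMatrix_mulVec_apply]
    calc ∑ v, ∑ u ∈ G.neighborFinset v, x u
        = ∑ v : V, ∑ u : V, if G.Adj v u then x u else 0 := by
          refine Finset.sum_congr rfl fun v _ => ?_
          simp [SimpleGraph.neighborFinset_eq_filter, Finset.sum_filter]
      _ = ∑ u : V, ∑ v : V, if G.Adj v u then x u else 0 := Finset.sum_comm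
      _ = ∑ u : V, (d : ℝ) * x u := by
          refine Finset.sum_congr rfl fun u _ => ?_
          rw [Finset.sum_ite, Finset.sum_const_zero, add_zero, Finset.sum_const,
            nsmul_eq_mul]
          congr 1
          have : Finset.univ.filter (fun v => G.Adj v u) = G.neighborFinset u := by
            ext v; simp [SimpleGraph.adj_comm]
          rw [this]
          exact_mod_cast congrArg Nat.cast (hreg u)
      _ = d * ∑ u, x u := by rw [Finset.mul_sum]
  have hA : (G.adjMatrix ℝ).IsHermitian := by
    unfold Matrix.IsHermitian
    simpa using (SimpleGraph.isSymm_adjMatrix G : (G.adjMatrix ℝ).IsSymm)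
  set b := hA.eigenvectorBasis with hb
  set y : EuclideanSpace ℝ V := WithLp.toLp 2 (fun v => (if v ∈ D' then (1:ℝ) else 0) - (D'.card : ℝ) / n)
    with hy
  have horth : ∀ j, inner (𝕜 := ℝ) (b j) y = 0 := by
    intro j
    set x : V → ℝ := ⇑(b j) with hx
    set μ : ℝ := hA.eigenvalues j with hμ
    have hAx : G.adjMatrix ℝ *ᵥ x = μ • x := hA.mulVec_eigenvectorBasis j
    set s : ℝ := ∑ v, x v with hs
    set c : ℝ := s / n with hc
    have h1 : μ * s = d * s := by
      calc μ * s = ∑ v, (μ • x) v := by simp [hs, Finset.mul_sum]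
        _ = ∑ v, (G.adjMatrix ℝ *ᵥ x) v := by rw [hAx]
        _ = d * s := hsum x
    have hdc : (d : ℝ) * c = μ * c := by
      rw [hc, ← mul_div_assoc, ← mul_div_assoc, h1]
    set x' : V → ℝ := fun v => x v - c with hx'
    have hsum' : ∑ v, x' v = 0 := by
      simp only [hx', Finset.sum_sub_distrib, Finset.sum_const, nsmul_eq_mul, ← hs]
      rw [hc]
      field_simp
      rw [Finset.card_univ, ← hn]; ring
    have hAx' : G.adjMatrix ℝ *ᵥ x' = μ • x' := by
      funext v
      have h2 : (G.adjMatrix ℝ *ᵥ fun _ => c) v = d * c :=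
        SimpleGraph.adjMatrix_mulVec_const_apply_of_regular hreg
      have h1' : (G.adjMatrix ℝ *ᵥ x') v
          = (G.adjMatrix ℝ *ᵥ x) v - (G.adjMatrix ℝ *ᵥ (fun _ => c)) v := by
        have : x' = x - (fun _ => c) := by funext w; simp [hx']
        rw [this, Matrix.mulVec_sub]; rfl
      rw [h1', hAx, h2]
      simp only [Pi.smul_apply, smul_eq_mul, hx']
      linear_combination -hdc
    have hzero := h μ x' hAx' hsum'
    have hDx : ∑ v ∈ D', x v = D'.card * c := by
      have heq : ∑ v ∈ D', x' v = (∑ v ∈ D', x v) - D'.card * c := by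
        simp [hx', Finset.sum_sub_distrib, Finset.sum_const, nsmul_eq_mul]
      rw [heq] at hzero
      linarith
    have hinner : inner (𝕜 := ℝ) (b j) y = ∑ v, x v * y v := by
      simp [PiLp.inner_apply, RCLike.inner_apply, hx]
      exact Finset.sum_congr rfl fun _ _ => mul_comm _ _
    rw [hinner]
    simp only [hy, PiLp.toLp_apply, mul_sub, Finset.sum_sub_distrib, mul_ite, mul_one, mul_zero]
    rw [Finset.sum_ite_mem, Finset.univ_inter, hDx, ← Finset.sum_mul, ← hs]
    rw [hc]; ring
  have hy0 : y = 0 := by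
    have h1 : b.repr y = 0 := by
      ext j
      simpa [OrthonormalBasis.repr_apply_apply] using horth j
    simpa using congrArg b.repr.symm h1
  have hy0' : ∀ v : V, (if v ∈ D' then (1:ℝ) else 0) - (D'.card : ℝ) / n = 0 := by
    intro v
    have hzv : y v = (0 : ℝ) := by rw [hy0]; rfl
    simpa [hy, PiLp.toLp_apply] using hzv
  rcases Finset.eq_empty_or_nonempty D' with h0 | ⟨v₀, hv₀⟩
  · left; exact h0
  · right
    have h1 := hy0' v₀
    rw [if_pos hv₀] at h1
    ext v
    simp only [Finset.mem_univ, iff_true]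
    by_contra hv
    have h2 := hy0' v
    rw [if_neg hv] at h2
    linarith

/-- Let `G` be `d`-regular on `n` vertices and let `D` be a nonempty subset of the
vertices of the Mycielskian `M(G)` averaging all `2n − 2` adjacency eigenvectors of
`M(G)` arising from eigenvectors of `A(G)` orthogonal to the all-ones vector (i.e.
for every such eigenvector `x`, the sums of `(x, −φ̄x, 0)` and `(x, −φx, 0)` over `D`
vanish). Then either `D = {u}` or `|D| ≥ n`. -/
theorem mycielskian_design_size
    {V : Type*} [Fintype V] [DecidableEq V] (G : SimpleGraph V) [DecidableRel G.Adj]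
    (d n : ℕ) (hreg : G.IsRegularOfDegree d) (hn : Fintype.card V = n)
    (D : Finset (V ⊕ V ⊕ Unit)) (hne : D.Nonempty)
    (hD : ∀ (μ : ℝ) (x : V → ℝ), G.adjMatrix ℝ *ᵥ x = μ • x → ∑ v, x v = 0 →
      (∑ v ∈ Finset.univ.filter (fun v : V => Sum.inl v ∈ D), x v) -
          Real.goldenConj * (∑ v ∈ Finset.univ.filter (fun v : V => Sum.inr (Sum.inl v) ∈ D), x v)
        = 0 ∧
      (∑ v ∈ Finset.univ.filter (fun v : V => Sum.inl v ∈ D), x v) -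
          Real.goldenRatio * (∑ v ∈ Finset.univ.filter (fun v : V => Sum.inr (Sum.inl v) ∈ D), x v)
        = 0) :
    D = {Sum.inr (Sum.inr ())} ∨ n ≤ D.card := by
  set D₁ : Finset V := Finset.univ.filter (fun v : V => Sum.inl v ∈ D) with hD₁
  set D₂ : Finset V := Finset.univ.filter (fun v : V => Sum.inr (Sum.inl v) ∈ D) with hD₂
  have hgold : Real.goldenRatio - Real.goldenConj ≠ 0 := by
    rw [Real.goldenRatio_sub_goldenConj]
    positivity
  have havg : ∀ (μ : ℝ) (x : V → ℝ), G.adjMatrix ℝ *ᵥ x = μ • x → ∑ v, x v = 0 →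
      (∑ v ∈ D₁, x v = 0) ∧ (∑ v ∈ D₂, x v = 0) := by
    intro μ x hx hs
    obtain ⟨e1, e2⟩ := hD μ x hx hs
    have h2 : ∑ v ∈ D₂, x v = 0 := by
      have : (Real.goldenRatio - Real.goldenConj) * (∑ v ∈ D₂, x v) = 0 := by
        linear_combination e1 - e2
      exact (mul_eq_zero.mp this).resolve_left hgold
    refine ⟨?_, h2⟩
    rw [h2, mul_zero, sub_zero] at e1
    exact e1
  have key₁ := key_avg_lemma G d hreg D₁ (fun μ x hx hs => (havg μ x hx hs).1)
  have key₂ := key_avg_lemma G d hreg D₂ (fun μ x hx hs => (havg μ x hx hs).2)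
  rcases key₁ with h1 | h1
  · rcases key₂ with h2 | h2
    · -- D ⊆ {u}
      left
      have hsub : D ⊆ {Sum.inr (Sum.inr ())} := by
        intro a ha
        rcases a with v | v | u
        · exfalso
          have : v ∈ D₁ := by simp [hD₁, ha]
          rw [h1] at this
          exact absurd this (Finset.notMem_empty v)
        · exfalso
          have : v ∈ D₂ := by simp [hD₂, ha]
          rw [h2] at this
          exact absurd this (Finset.notMem_empty v)
        · simp
      rcases Finset.subset_singleton_iff.mp hsub with h | h
      · exact absurd h (Finset.nonempty_iff_ne_empty.mp hne)
      · exact h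
    · -- D₂ = univ, so |D| ≥ n
      right
      have hmap : (Finset.univ : Finset V).image (fun v => (Sum.inr (Sum.inl v) : V ⊕ V ⊕ Unit)) ⊆ D := by
        intro a ha
        rcases Finset.mem_image.mp ha with ⟨v, _, rfl⟩
        have : v ∈ D₂ := h2 ▸ Finset.mem_univ v
        simpa [hD₂] using this
      have hcard : ((Finset.univ : Finset V).image
          (fun v => (Sum.inr (Sum.inl v) : V ⊕ V ⊕ Unit))).card = n := by
        rw [Finset.card_image_of_injective _ (fun a b hab => by
          simpa using hab)]
        simpa using hn
      calc n = _ := hcard.symm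
        _ ≤ D.card := Finset.card_le_card hmap
  · -- D₁ = univ
    right
    have hmap : (Finset.univ : Finset V).image (fun v => (Sum.inl v : V ⊕ V ⊕ Unit)) ⊆ D := by
      intro a ha
      rcases Finset.mem_image.mp ha with ⟨v, _, rfl⟩
      have : v ∈ D₁ := h1 ▸ Finset.mem_univ v
      simpa [hD₁] using this
    have hcard : ((Finset.univ : Finset V).image
        (fun v => (Sum.inl v : V ⊕ V ⊕ Unit))).card = n := by
      rw [Finset.card_image_of_injective _ (fun a b hab => by simpa using hab)]
      simpa using hn
    calc n = _ := hcard.symm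
      _ ≤ D.card := Finset.card_le_card hmap
end
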